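/- For the spin-1/2 representation of the Sklyanin algebra, under the identification of Θ^{2+}_{00} with ℂ² via the basis (θ₀₀(2z,2τ)-θ₁₀(2z,2τ), θ₀₀(2z,2τ)+θ₁₀(2z,2τ)), the difference operators ρ^{1/2}(S^a) defined by (ρ^{1/2}(S^a)f)(z) = (s_a(z-η/2)f(z+η) - s_a(-z-η/2)f(z-η))/θ₁₁(2z,τ), with s₀(z)=θ₁₁(η,τ)θ₁₁(2z,τ), s₁(z)=θ₁₀(η,τ)θ₁₀(2z,τ), s₂(z)=iθ₀₀(η,τ)θ₀₀(2z,τ), s₃(z)=θ₀₁(η,τ)θ₀₁(2z,τ), act as ρ^{1/2}(S^a) = θ₁₁(2η,τ)·σ^a, where σ^a are the Pauli matrices (σ^0 = identity). -/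

import Mathlib

open Complex

/-- The theta function θ_{ab}(z,τ) with characteristics a,b. -/
noncomputable def jtheta (a b : ℝ) (z τ : ℂ) : ℂ :=
  ∑' n : ℤ, Complex.exp (Real.pi * Complex.I * ((a : ℂ)/2 + (n : ℂ))^2 * τ
      + 2 * Real.pi * Complex.I * ((a : ℂ)/2 + (n : ℂ)) * ((b : ℂ)/2 + z))

/-- The coefficient functions s_a(z) of the Sklyanin difference operators. -/
noncomputable def sfun (η τ : ℂ) : Fin 4 → ℂ → ℂ
  | 0 => fun z => jtheta 1 1 η τ * jtheta 1 1 (2*z) τ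
  | 1 => fun z => jtheta 1 0 η τ * jtheta 1 0 (2*z) τ
  | 2 => fun z => Complex.I * jtheta 0 0 η τ * jtheta 0 0 (2*z) τ
  | 3 => fun z => jtheta 0 1 η τ * jtheta 0 1 (2*z) τ

/-- The numerator of the spin-1/2 Sklyanin difference operator ρ^{1/2}(S^a):
(ρ^{1/2}(S^a)f)(z)·θ₁₁(2z,τ) = s_a(z-η/2)f(z+η) - s_a(-z-η/2)f(z-η). -/
noncomputable def Snum (η τ : ℂ) (a : Fin 4) (f : ℂ → ℂ) (z : ℂ) : ℂ :=
  sfun η τ a (z - η/2) * f (z + η) - sfun η τ a (-z - η/2) * f (z - η)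

/-- First basis vector of Θ^{2+}_{00}: θ₀₀(2z,2τ) - θ₁₀(2z,2τ). -/
noncomputable def f₁ (τ z : ℂ) : ℂ := jtheta 0 0 (2*z) (2*τ) - jtheta 1 0 (2*z) (2*τ)

/-- Second basis vector of Θ^{2+}_{00}: θ₀₀(2z,2τ) + θ₁₀(2z,2τ). -/
noncomputable def f₂ (τ z : ℂ) : ℂ := jtheta 0 0 (2*z) (2*τ) + jtheta 1 0 (2*z) (2*τ)

noncomputable def th (s w τ : ℂ) (n : ℤ) : ℂ :=
  Complex.exp (Real.pi * Complex.I * (s + (n : ℂ))^2 * τ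
      + 2 * Real.pi * Complex.I * (s + (n : ℂ)) * w)

noncomputable def Th (s w τ : ℂ) : ℂ := ∑' n : ℤ, th s w τ n

lemma th_eq_jacobi (s w τ : ℂ) (n : ℤ) :
    th s w τ n = Complex.exp (Real.pi * Complex.I * s^2 * τ + 2 * Real.pi * Complex.I * s * w)
      * jacobiTheta₂_term n (w + s * τ) τ := by
  rw [th, jacobiTheta₂_term, ← Complex.exp_add]
  congr 1
  ring

lemma summable_th {τ : ℂ} (hτ : 0 < τ.im) (s w : ℂ) : Summable (th s w τ) := by
  exact Summable.congr (((summable_jacobiTheta₂_term_iff (w + s * τ) τ).mpr hτ).mul_left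
    (Complex.exp (Real.pi * Complex.I * s^2 * τ + 2 * Real.pi * Complex.I * s * w)))
    (fun n => (th_eq_jacobi s w τ n).symm)

lemma summable_norm_th {τ : ℂ} (hτ : 0 < τ.im) (s w : ℂ) :
    Summable (fun n : ℤ => ‖th s w τ n‖) :=
  summable_norm_iff.mpr (summable_th hτ s w)

lemma tsum_sum_type' {α β : Type} (f : α ⊕ β → ℂ) (h : Summable f) :
    ∑' x, f x = ∑' a, f (.inl a) + ∑' b, f (.inr b) := by
  rw [← (Equiv.sumEquivSigmaBool α β).symm.tsum_eq f, Summable.tsum_sigma]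
  · rw [tsum_bool]; rfl
  · exact h.comp_injective (Equiv.sumEquivSigmaBool α β).symm.injective

def E : (ℤ × ℤ) ⊕ (ℤ × ℤ) ≃ ℤ × ℤ where
  toFun p := match p with
    | .inl (k, l) => (k + l, k - l)
    | .inr (k, l) => (k + l + 1, k - l)
  invFun q := if (q.1 + q.2) % 2 = 0 then .inl ((q.1 + q.2)/2, (q.1 - q.2)/2)
    else .inr ((q.1 + q.2 - 1)/2, (q.1 - q.2 - 1)/2)
  left_inv p := by
    rcases p with ⟨k, l⟩ | ⟨k, l⟩
    · simp only; rw [if_pos (by omega)]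
      simp only [Sum.inl.injEq, Prod.mk.injEq]; omega
    · simp only; rw [if_neg (by omega)]
      simp only [Sum.inr.injEq, Prod.mk.injEq]; omega
  right_inv q := by
    obtain ⟨m, n⟩ := q
    dsimp only
    split_ifs with h
    · simp only [Prod.mk.injEq]; omega
    · simp only [Prod.mk.injEq]; omega

lemma T1 (s x y τ : ℂ) (k l : ℤ) :
    th s x τ (k + l) * th s y τ (k - l)
      = th s (x + y) (2*τ) k * th 0 (x - y) (2*τ) l := by
  simp only [th]
  rw [← Complex.exp_add, ← Complex.exp_add]
  congr 1
  push_cast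
  ring

lemma T2 (s x y τ : ℂ) (k l : ℤ) :
    th s x τ (k + l + 1) * th s y τ (k - l)
      = th (s + 1/2) (x + y) (2*τ) k * th (1/2) (x - y) (2*τ) l := by
  simp only [th]
  rw [← Complex.exp_add, ← Complex.exp_add]
  congr 1
  push_cast
  ring

set_option maxHeartbeats 1000000 in
lemma master {τ : ℂ} (hτ : 0 < τ.im) (s x y : ℂ) :
    Th s x τ * Th s y τ
      = Th s (x + y) (2*τ) * Th 0 (x - y) (2*τ)
        + Th (s + 1/2) (x + y) (2*τ) * Th (1/2) (x - y) (2*τ) := by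
  have h2 : 0 < (2*τ).im := by
    rw [Complex.mul_im]; simp; linarith
  have HF : Summable (fun q : ℤ × ℤ => th s x τ q.1 * th s y τ q.2) :=
    summable_mul_of_summable_norm (summable_norm_th hτ s x) (summable_norm_th hτ s y)
  calc Th s x τ * Th s y τ
      = ∑' q : ℤ × ℤ, th s x τ q.1 * th s y τ q.2 :=
        tsum_mul_tsum_of_summable_norm (summable_norm_th hτ s x) (summable_norm_th hτ s y)
    _ = ∑' p : (ℤ × ℤ) ⊕ (ℤ × ℤ), th s x τ (E p).1 * th s y τ (E p).2 :=
        (E.tsum_eq _).symm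
    _ = (∑' kl : ℤ × ℤ, th s x τ (E (.inl kl)).1 * th s y τ (E (.inl kl)).2)
        + ∑' kl : ℤ × ℤ, th s x τ (E (.inr kl)).1 * th s y τ (E (.inr kl)).2 :=
        tsum_sum_type' _ (E.summable_iff.mpr HF)
    _ = (∑' kl : ℤ × ℤ, th s (x+y) (2*τ) kl.1 * th 0 (x-y) (2*τ) kl.2)
        + ∑' kl : ℤ × ℤ, th (s+1/2) (x+y) (2*τ) kl.1 * th (1/2) (x-y) (2*τ) kl.2 := by
        congr 1
        · exact tsum_congr fun ⟨k, l⟩ => T1 s x y τ k l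
        · exact tsum_congr fun ⟨k, l⟩ => T2 s x y τ k l
    _ = Th s (x + y) (2*τ) * Th 0 (x - y) (2*τ)
        + Th (s + 1/2) (x + y) (2*τ) * Th (1/2) (x - y) (2*τ) := by
        rw [Th, Th, Th, Th,
          tsum_mul_tsum_of_summable_norm (summable_norm_th h2 s (x+y)) (summable_norm_th h2 0 (x-y)),
          tsum_mul_tsum_of_summable_norm (summable_norm_th h2 (s+1/2) (x+y)) (summable_norm_th h2 (1/2) (x-y))]

lemma th_shift (s w τ : ℂ) (n : ℤ) :
    th s (w + 1) τ n = Complex.exp (2 * Real.pi * Complex.I * s) * th s w τ n := by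
  simp only [th]
  rw [show Real.pi * Complex.I * (s + (n:ℂ))^2 * τ + 2 * Real.pi * Complex.I * (s + (n:ℂ)) * (w + 1)
      = (2 * Real.pi * Complex.I * s
          + (Real.pi * Complex.I * (s + (n:ℂ))^2 * τ + 2 * Real.pi * Complex.I * (s + (n:ℂ)) * w))
        + (n:ℂ) * (2 * Real.pi * Complex.I) from by ring,
    Complex.exp_add, Complex.exp_int_mul_two_pi_mul_I, mul_one, Complex.exp_add]

lemma Th_shift (s w τ : ℂ) :
    Th s (w + 1) τ = Complex.exp (2 * Real.pi * Complex.I * s) * Th s w τ := by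
  rw [Th, Th, ← tsum_mul_left]
  exact tsum_congr fun n => th_shift s w τ n

lemma Th_succ (s w τ : ℂ) : Th (s + 1) w τ = Th s w τ := by
  rw [Th, Th, ← (Equiv.addRight (1 : ℤ)).tsum_eq (th s w τ)]
  refine tsum_congr fun n => ?_
  simp only [th, Equiv.coe_addRight]
  congr 2 <;> push_cast <;> ring

lemma Th_neg (s w τ : ℂ) : Th s (-w) τ = Th (-s) w τ := by
  rw [Th, Th, ← (Equiv.neg ℤ).tsum_eq (th (-s) w τ)]
  refine tsum_congr fun n => ?_
  simp only [th, Equiv.neg_apply]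
  congr 1
  push_cast
  ring

lemma jt00 (z τ : ℂ) : jtheta 0 0 z τ = Th 0 z τ := by
  refine tsum_congr fun n => ?_
  congr 1 <;> push_cast <;> ring

lemma jt10 (z τ : ℂ) : jtheta 1 0 z τ = Th (1/2) z τ := by
  refine tsum_congr fun n => ?_
  congr 1 <;> push_cast <;> ring

lemma jt01 (z τ : ℂ) : jtheta 0 1 z τ = Th 0 (1/2 + z) τ := by
  refine tsum_congr fun n => ?_
  congr 1 <;> push_cast <;> ring

lemma jt11 (z τ : ℂ) : jtheta 1 1 z τ = Th (1/2) (1/2 + z) τ := by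
  refine tsum_congr fun n => ?_
  congr 1 <;> push_cast <;> ring

lemma Th_neg_half (w τ : ℂ) : Th (-(1/2)) w τ = Th (1/2) w τ := by
  conv_rhs => rw [show (1/2 : ℂ) = -(1/2) + 1 from by norm_num]
  exact (Th_succ _ _ _).symm

lemma P00 {τ : ℂ} (hτ : 0 < τ.im) (u v : ℂ) :
    jtheta 0 0 u τ * jtheta 0 0 v τ
      = jtheta 0 0 (u+v) (2*τ) * jtheta 0 0 (u-v) (2*τ)
        + jtheta 1 0 (u+v) (2*τ) * jtheta 1 0 (u-v) (2*τ) := by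
  rw [jt00, jt00, jt00, jt00, jt10, jt10, master hτ 0 u v, zero_add]

lemma P10 {τ : ℂ} (hτ : 0 < τ.im) (u v : ℂ) :
    jtheta 1 0 u τ * jtheta 1 0 v τ
      = jtheta 1 0 (u+v) (2*τ) * jtheta 0 0 (u-v) (2*τ)
        + jtheta 0 0 (u+v) (2*τ) * jtheta 1 0 (u-v) (2*τ) := by
  rw [jt10, jt10, jt10, jt10, jt00, jt00, master hτ (1/2) u v,
    show (1/2 + 1/2 : ℂ) = 0 + 1 from by norm_num, Th_succ]

lemma P01 {τ : ℂ} (hτ : 0 < τ.im) (u v : ℂ) :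
    jtheta 0 1 u τ * jtheta 0 1 v τ
      = jtheta 0 0 (u+v) (2*τ) * jtheta 0 0 (u-v) (2*τ)
        - jtheta 1 0 (u+v) (2*τ) * jtheta 1 0 (u-v) (2*τ) := by
  rw [jt01, jt01, jt00, jt00, jt10, jt10, master hτ 0 (1/2+u) (1/2+v), zero_add,
    show (1/2 + u + (1/2 + v) : ℂ) = (u + v) + 1 from by ring,
    show (1/2 + u - (1/2 + v) : ℂ) = u - v from by ring,
    Th_shift, Th_shift, mul_zero, Complex.exp_zero, one_mul,
    show (2:ℂ) * Real.pi * Complex.I * (1/2) = Real.pi * Complex.I from by ring,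
    Complex.exp_pi_mul_I]
  ring

lemma P11 {τ : ℂ} (hτ : 0 < τ.im) (u v : ℂ) :
    jtheta 1 1 u τ * jtheta 1 1 v τ
      = jtheta 0 0 (u+v) (2*τ) * jtheta 1 0 (u-v) (2*τ)
        - jtheta 1 0 (u+v) (2*τ) * jtheta 0 0 (u-v) (2*τ) := by
  rw [jt11, jt11, jt00, jt00, jt10, jt10, master hτ (1/2) (1/2+u) (1/2+v),
    show (1/2 + 1/2 : ℂ) = 0 + 1 from by norm_num, Th_succ,
    show (1/2 + u + (1/2 + v) : ℂ) = (u + v) + 1 from by ring,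
    show (1/2 + u - (1/2 + v) : ℂ) = u - v from by ring,
    Th_shift, Th_shift, mul_zero, Complex.exp_zero, one_mul,
    show (2:ℂ) * Real.pi * Complex.I * (1/2) = Real.pi * Complex.I from by ring,
    Complex.exp_pi_mul_I]
  ring

lemma N00 (w τ : ℂ) : jtheta 0 0 (-w) τ = jtheta 0 0 w τ := by
  rw [jt00, jt00, Th_neg, neg_zero]

lemma N10 (w τ : ℂ) : jtheta 1 0 (-w) τ = jtheta 1 0 w τ := by
  rw [jt10, jt10, Th_neg, Th_neg_half]

lemma N01 (w τ : ℂ) : jtheta 0 1 (-w) τ = jtheta 0 1 w τ := by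
  rw [jt01, jt01, show (1/2 + -w : ℂ) = -(w - 1/2) from by ring, Th_neg, neg_zero,
    show (1/2 + w : ℂ) = (w - 1/2) + 1 from by ring, Th_shift, mul_zero,
    Complex.exp_zero, one_mul]

lemma N11 (w τ : ℂ) : jtheta 1 1 (-w) τ = -jtheta 1 1 w τ := by
  rw [jt11, jt11, show (1/2 + -w : ℂ) = -(w - 1/2) from by ring, Th_neg, Th_neg_half,
    show (1/2 + w : ℂ) = (w - 1/2) + 1 from by ring, Th_shift,
    show (2:ℂ) * Real.pi * Complex.I * (1/2) = Real.pi * Complex.I from by ring,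
    Complex.exp_pi_mul_I]
  ring

/-- In the basis (f₁, f₂) of Θ^{2+}_{00}, the spin-1/2 representation of the
Sklyanin algebra is ρ^{1/2}(S^a) = θ₁₁(2η,τ)·σ^a, σ^a the Pauli matrices
(σ⁰ = 1). Written in the multiplied form, with c(z) = θ₁₁(2z,τ)θ₁₁(2η,τ). -/
theorem spin_half_representation_pauli (τ η : ℂ) (hτ : 0 < τ.im) :
    ∀ z : ℂ,
      Snum η τ 0 (f₁ τ) z = jtheta 1 1 (2*z) τ * jtheta 1 1 (2*η) τ * f₁ τ z ∧
      Snum η τ 0 (f₂ τ) z = jtheta 1 1 (2*z) τ * jtheta 1 1 (2*η) τ * f₂ τ z ∧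
      Snum η τ 1 (f₁ τ) z = jtheta 1 1 (2*z) τ * jtheta 1 1 (2*η) τ * f₂ τ z ∧
      Snum η τ 1 (f₂ τ) z = jtheta 1 1 (2*z) τ * jtheta 1 1 (2*η) τ * f₁ τ z ∧
      Snum η τ 2 (f₁ τ) z
        = jtheta 1 1 (2*z) τ * jtheta 1 1 (2*η) τ * (Complex.I * f₂ τ z) ∧
      Snum η τ 2 (f₂ τ) z
        = jtheta 1 1 (2*z) τ * jtheta 1 1 (2*η) τ * (-Complex.I * f₁ τ z) ∧
      Snum η τ 3 (f₁ τ) z = jtheta 1 1 (2*z) τ * jtheta 1 1 (2*η) τ * f₁ τ z ∧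
      Snum η τ 3 (f₂ τ) z = jtheta 1 1 (2*z) τ * jtheta 1 1 (2*η) τ * (- f₂ τ z) := by
  intro z
  have hm00 : jtheta 0 0 η τ * jtheta 0 0 (2*z - η) τ = jtheta 0 0 (2*z) (2*τ) * jtheta 0 0 (2*z - 2*η) (2*τ) + jtheta 1 0 (2*z) (2*τ) * jtheta 1 0 (2*z - 2*η) (2*τ) := by
    have h := P00 hτ η (2*z - η)
    rw [show η + (2*z - η) = 2*z from by ring,
      show η - (2*z - η) = -(2*z - 2*η) from by ring, N00, N10] at h
    exact h
  have hp00 : jtheta 0 0 η τ * jtheta 0 0 (2*z + η) τ = jtheta 0 0 (2*z + 2*η) (2*τ) * jtheta 0 0 (2*z) (2*τ) + jtheta 1 0 (2*z + 2*η) (2*τ) * jtheta 1 0 (2*z) (2*τ) := by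
    have h := P00 hτ η (2*z + η)
    rw [show η + (2*z + η) = 2*z + 2*η from by ring,
      show η - (2*z + η) = -(2*z) from by ring, N00, N10] at h
    exact h
  have hm10 : jtheta 1 0 η τ * jtheta 1 0 (2*z - η) τ = jtheta 1 0 (2*z) (2*τ) * jtheta 0 0 (2*z - 2*η) (2*τ) + jtheta 0 0 (2*z) (2*τ) * jtheta 1 0 (2*z - 2*η) (2*τ) := by
    have h := P10 hτ η (2*z - η)
    rw [show η + (2*z - η) = 2*z from by ring,
      show η - (2*z - η) = -(2*z - 2*η) from by ring, N00, N10] at h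
    exact h
  have hp10 : jtheta 1 0 η τ * jtheta 1 0 (2*z + η) τ = jtheta 1 0 (2*z + 2*η) (2*τ) * jtheta 0 0 (2*z) (2*τ) + jtheta 0 0 (2*z + 2*η) (2*τ) * jtheta 1 0 (2*z) (2*τ) := by
    have h := P10 hτ η (2*z + η)
    rw [show η + (2*z + η) = 2*z + 2*η from by ring,
      show η - (2*z + η) = -(2*z) from by ring, N00, N10] at h
    exact h
  have hm01 : jtheta 0 1 η τ * jtheta 0 1 (2*z - η) τ = jtheta 0 0 (2*z) (2*τ) * jtheta 0 0 (2*z - 2*η) (2*τ) - jtheta 1 0 (2*z) (2*τ) * jtheta 1 0 (2*z - 2*η) (2*τ) := by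
    have h := P01 hτ η (2*z - η)
    rw [show η + (2*z - η) = 2*z from by ring,
      show η - (2*z - η) = -(2*z - 2*η) from by ring, N00, N10] at h
    exact h
  have hp01 : jtheta 0 1 η τ * jtheta 0 1 (2*z + η) τ = jtheta 0 0 (2*z + 2*η) (2*τ) * jtheta 0 0 (2*z) (2*τ) - jtheta 1 0 (2*z + 2*η) (2*τ) * jtheta 1 0 (2*z) (2*τ) := by
    have h := P01 hτ η (2*z + η)
    rw [show η + (2*z + η) = 2*z + 2*η from by ring,
      show η - (2*z + η) = -(2*z) from by ring, N00, N10] at h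
    exact h
  have hm11 : jtheta 1 1 η τ * jtheta 1 1 (2*z - η) τ = jtheta 0 0 (2*z) (2*τ) * jtheta 1 0 (2*z - 2*η) (2*τ) - jtheta 1 0 (2*z) (2*τ) * jtheta 0 0 (2*z - 2*η) (2*τ) := by
    have h := P11 hτ η (2*z - η)
    rw [show η + (2*z - η) = 2*z from by ring,
      show η - (2*z - η) = -(2*z - 2*η) from by ring, N00, N10] at h
    exact h
  have hp11 : jtheta 1 1 η τ * jtheta 1 1 (2*z + η) τ = jtheta 0 0 (2*z + 2*η) (2*τ) * jtheta 1 0 (2*z) (2*τ) - jtheta 1 0 (2*z + 2*η) (2*τ) * jtheta 0 0 (2*z) (2*τ) := by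
    have h := P11 hτ η (2*z + η)
    rw [show η + (2*z + η) = 2*z + 2*η from by ring,
      show η - (2*z + η) = -(2*z) from by ring, N00, N10] at h
    exact h
  have hz11 : jtheta 1 1 (2*z) τ * jtheta 1 1 (2*η) τ = jtheta 0 0 (2*z + 2*η) (2*τ) * jtheta 1 0 (2*z - 2*η) (2*τ) - jtheta 1 0 (2*z + 2*η) (2*τ) * jtheta 0 0 (2*z - 2*η) (2*τ) := by
    exact P11 hτ (2*z) (2*η)
  refine ⟨?_, ?_, ?_, ?_, ?_, ?_, ?_, ?_⟩ <;>
      simp only [Snum, sfun, f₁, f₂] <;>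
      rw [show (2:ℂ)*(z - η/2) = 2*z - η from by ring,
        show (2:ℂ)*(-z - η/2) = -(2*z + η) from by ring,
        show (2:ℂ)*(z + η) = 2*z + 2*η from by ring,
        show (2:ℂ)*(z - η) = 2*z - 2*η from by ring]
  · rw [N11]
    linear_combination (jtheta 0 0 (2*z + 2*η) (2*τ) - jtheta 1 0 (2*z + 2*η) (2*τ)) * hm11 + (jtheta 0 0 (2*z - 2*η) (2*τ) - jtheta 1 0 (2*z - 2*η) (2*τ)) * hp11 - (jtheta 0 0 (2*z) (2*τ) - jtheta 1 0 (2*z) (2*τ)) * hz11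
  · rw [N11]
    linear_combination (jtheta 0 0 (2*z + 2*η) (2*τ) + jtheta 1 0 (2*z + 2*η) (2*τ)) * hm11 + (jtheta 0 0 (2*z - 2*η) (2*τ) + jtheta 1 0 (2*z - 2*η) (2*τ)) * hp11 - (jtheta 0 0 (2*z) (2*τ) + jtheta 1 0 (2*z) (2*τ)) * hz11
  · rw [N10]
    linear_combination (jtheta 0 0 (2*z + 2*η) (2*τ) - jtheta 1 0 (2*z + 2*η) (2*τ)) * hm10 - (jtheta 0 0 (2*z - 2*η) (2*τ) - jtheta 1 0 (2*z - 2*η) (2*τ)) * hp10 - (jtheta 0 0 (2*z) (2*τ) + jtheta 1 0 (2*z) (2*τ)) * hz11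
  · rw [N10]
    linear_combination (jtheta 0 0 (2*z + 2*η) (2*τ) + jtheta 1 0 (2*z + 2*η) (2*τ)) * hm10 - (jtheta 0 0 (2*z - 2*η) (2*τ) + jtheta 1 0 (2*z - 2*η) (2*τ)) * hp10 - (jtheta 0 0 (2*z) (2*τ) - jtheta 1 0 (2*z) (2*τ)) * hz11
  · rw [N00]
    linear_combination Complex.I * (jtheta 0 0 (2*z + 2*η) (2*τ) - jtheta 1 0 (2*z + 2*η) (2*τ)) * hm00 - Complex.I * (jtheta 0 0 (2*z - 2*η) (2*τ) - jtheta 1 0 (2*z - 2*η) (2*τ)) * hp00 - (Complex.I * (jtheta 0 0 (2*z) (2*τ) + jtheta 1 0 (2*z) (2*τ))) * hz11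
  · rw [N00]
    linear_combination Complex.I * (jtheta 0 0 (2*z + 2*η) (2*τ) + jtheta 1 0 (2*z + 2*η) (2*τ)) * hm00 - Complex.I * (jtheta 0 0 (2*z - 2*η) (2*τ) + jtheta 1 0 (2*z - 2*η) (2*τ)) * hp00 - (-Complex.I * (jtheta 0 0 (2*z) (2*τ) - jtheta 1 0 (2*z) (2*τ))) * hz11
  · rw [N01]
    linear_combination (jtheta 0 0 (2*z + 2*η) (2*τ) - jtheta 1 0 (2*z + 2*η) (2*τ)) * hm01 - (jtheta 0 0 (2*z - 2*η) (2*τ) - jtheta 1 0 (2*z - 2*η) (2*τ)) * hp01 - (jtheta 0 0 (2*z) (2*τ) - jtheta 1 0 (2*z) (2*τ)) * hz11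
  · rw [N01]
    linear_combination (jtheta 0 0 (2*z + 2*η) (2*τ) + jtheta 1 0 (2*z + 2*η) (2*τ)) * hm01 - (jtheta 0 0 (2*z - 2*η) (2*τ) + jtheta 1 0 (2*z - 2*η) (2*τ)) * hp01 - (-(jtheta 0 0 (2*z) (2*τ) + jtheta 1 0 (2*z) (2*τ))) * hz11
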